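/- If (a_α, b_α)_{α<ω₁} is a pre-gap that is split by some infinite c ⊆ ω (i.e., a_α ⊆* c and b_α ∩ c finite for all α), then there exists an uncountable Γ ⊆ ω₁ such that a_α ∩ b_β = ∅ for all α < β in Γ. -/

import Mathlib

noncomputable section

/-- The set of countable ordinals, i.e. ordinals below `ω₁`. -/
abbrev Omega1 : Type 1 := {o : Ordinal // o < (Cardinal.aleph 1).ord}

/-- `(a_α, b_α)_{α<ω₁}` is a pre-gap. -/
def PreGap (a b : Omega1 → Set ℕ) : Prop :=
  (∀ α, (a α).Infinite) ∧ (∀ α, (b α).Infinite) ∧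
  (∀ α, a α ∩ b α = ∅) ∧
  (∀ α β : Omega1, α < β → (a α \ a β).Finite ∧ (b α \ b β).Finite) ∧
  (∀ δ γ : Omega1, (a δ ∩ b γ).Finite)

/-- `c` splits (fills) the pre-gap: `a_α ⊆* c` and `b_α ∩ c` finite for all `α`. -/
def Splits (c : Set ℕ) (a b : Omega1 → Set ℕ) : Prop :=
  c.Infinite ∧ ∀ α, (a α \ c).Finite ∧ (b α ∩ c).Finite

/-- A gap is a pre-gap which no infinite `c` splits. -/
def IsGap (a b : Omega1 → Set ℕ) : Prop :=
  PreGap a b ∧ ¬ ∃ c : Set ℕ, Splits c a b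

theorem omega1_uncountable' : ¬ (Set.univ : Set Omega1).Countable := by
  intro h
  have h1 : Cardinal.mk Omega1 ≤ Cardinal.aleph0 := by
    rw [← Cardinal.mk_univ]
    exact h.le_aleph0
  have h2 : Cardinal.mk Omega1 = Cardinal.lift.{1,0} (Cardinal.aleph 1) := by
    have := Ordinal.mk_Iio_ordinal.{0} ((Cardinal.aleph 1).ord)
    rw [Cardinal.card_ord] at this; exact this
  rw [h2, Cardinal.lift_le_aleph0] at h1
  exact absurd h1 (not_le.2 Cardinal.aleph0_lt_aleph_one)

/-- If a pre-gap is split by some infinite `c`, then there is an uncountable `Γ`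
with `a_α ∩ b_β = ∅` for all `α < β` in `Γ`. -/
theorem stmt1 (a b : Omega1 → Set ℕ) (hpre : PreGap a b)
    (c : Set ℕ) (hc : Splits c a b) :
    ∃ Γ : Set Omega1, ¬ Γ.Countable ∧
      ∀ α ∈ Γ, ∀ β ∈ Γ, α < β → a α ∩ b β = ∅ := by
  obtain ⟨_, _, hdisj, _, _⟩ := hpre
  obtain ⟨-, hsplit⟩ := hc
  have hnex : ∀ α, ∃ m : ℕ, (a α \ c) ∪ (b α ∩ c) ⊆ Set.Iio m := by
    intro α
    obtain ⟨m, hm⟩ := ((hsplit α).1.union (hsplit α).2).bddAbove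
    exact ⟨m + 1, fun x hx => Nat.lt_succ_of_le (hm hx)⟩
  choose n hn using hnex
  have hfinA : ∀ α, (a α ∩ Set.Iio (n α)).Finite :=
    fun α => (Set.finite_Iio (n α)).inter_of_right _
  have hfinB : ∀ α, (b α ∩ Set.Iio (n α)).Finite :=
    fun α => (Set.finite_Iio (n α)).inter_of_right _
  let f : Omega1 → ℕ × Finset ℕ × Finset ℕ := fun α =>
    (n α, (hfinA α).toFinset, (hfinB α).toFinset)
  have key : ∃ k, ¬ (f ⁻¹' {k}).Countable := by
    by_contra h
    push_neg at h
    apply omega1_uncountable'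
    have : (Set.univ : Set Omega1) = ⋃ k, f ⁻¹' {k} := by
      ext α; simp
    rw [this]
    exact Set.countable_iUnion h
  obtain ⟨⟨m, s, t⟩, hk⟩ := key
  refine ⟨f ⁻¹' {(m, s, t)}, hk, ?_⟩
  intro α hα β hβ hαβ
  simp only [Set.mem_preimage, Set.mem_singleton_iff, f, Prod.mk.injEq] at hα hβ
  obtain ⟨hnα, hsα, htα⟩ := hα
  obtain ⟨hnβ, hsβ, htβ⟩ := hβ
  ext x
  simp only [Set.mem_inter_iff, Set.mem_empty_iff_false, iff_false, not_and]
  intro hxa hxb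
  have hxm : x < m := by
    by_cases hxc : x ∈ c
    · have : x ∈ (a β \ c) ∪ (b β ∩ c) := Or.inr ⟨hxb, hxc⟩
      simpa [hnβ] using hn β this
    · have : x ∈ (a α \ c) ∪ (b α ∩ c) := Or.inl ⟨hxa, hxc⟩
      simpa [hnα] using hn α this
  have hx1 : x ∈ (hfinA α).toFinset := by
    rw [Set.Finite.mem_toFinset]; exact ⟨hxa, by rw [hnα]; exact hxm⟩
  rw [hsα, ← hsβ, Set.Finite.mem_toFinset] at hx1
  have : x ∈ a β ∩ b β := ⟨hx1.1, hxb⟩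
  rw [hdisj β] at this
  exact this
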